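/- The search directions p_n = Q_n T_n⁻¹ e_n of the rational Lanczos method satisfy the conjugacy relations ⟨𝒜 p_n, p_k⟩ = 0 for all n ≠ k. -/

import Mathlib

/-- Key computation: if k < n then ⟨𝒜 p_n, p_k⟩ = 0. -/
lemma stmt_14_aux {X : Type*} [NormedAddCommGroup X] [InnerProductSpace ℝ X]
    (𝒜 : Module.End ℝ X)
    (N : ℕ) (q : ℕ → X) (p : ℕ → X)
    (hp : ∀ n, 1 ≤ n → n ≤ N → ∃ dn : Fin n → ℝ,
      (∀ i : Fin n, ∑ j : Fin n,
          (inner ℝ (q ((i : ℕ) + 1)) (𝒜 (q ((j : ℕ) + 1))) : ℝ) * dn j =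
        if (i : ℕ) = n - 1 then 1 else 0) ∧
      p n = ∑ j : Fin n, dn j • q ((j : ℕ) + 1))
    (n k : ℕ) (hn1 : 1 ≤ n) (hnN : n ≤ N) (hk1 : 1 ≤ k) (hkN : k ≤ N)
    (hkn : k < n) : (inner ℝ (𝒜 (p n)) (p k) : ℝ) = 0 := by
  obtain ⟨dn, hdn, hpn⟩ := hp n hn1 hnN
  obtain ⟨dk, hdk, hpk⟩ := hp k hk1 hkN
  have key : ∀ j : Fin k, (inner ℝ (𝒜 (p n)) (q ((j : ℕ) + 1)) : ℝ) = 0 := by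
    intro j
    rw [real_inner_comm, hpn, map_sum]
    have : (inner ℝ (q ((j : ℕ) + 1)) (∑ l : Fin n, 𝒜 (dn l • q ((l : ℕ) + 1))) : ℝ)
        = ∑ l : Fin n, (inner ℝ (q ((j : ℕ) + 1)) (𝒜 (q ((l : ℕ) + 1))) : ℝ) * dn l := by
      rw [inner_sum]
      refine Finset.sum_congr rfl fun l _ => ?_
      rw [map_smul, inner_smul_right]
      ring
    rw [this]
    have hj : ((j : ℕ)) < n := lt_trans j.2 hkn
    have := hdn ⟨(j : ℕ), hj⟩
    simp only at this
    rw [this]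
    have : ((j : ℕ)) ≠ n - 1 := by omega
    simp [this]
  rw [hpk, inner_sum]
  refine Finset.sum_eq_zero fun j _ => ?_
  rw [inner_smul_right, key j, mul_zero]

theorem stmt_14 {X : Type*} [NormedAddCommGroup X] [InnerProductSpace ℝ X]
    [FiniteDimensional ℝ X]
    (𝒜 : Module.End ℝ X) (hsym : ∀ x y : X, (inner ℝ (𝒜 x) y : ℝ) = inner ℝ x (𝒜 y))
    (hpd : ∀ x : X, x ≠ 0 → 0 < (inner ℝ (𝒜 x) x : ℝ))
    (N : ℕ) (q : ℕ → X)
    (hON : ∀ i j, 1 ≤ i → i ≤ N → 1 ≤ j → j ≤ N →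
      (inner ℝ (q i) (q j) : ℝ) = if i = j then 1 else 0)
    (hspan : Submodule.span ℝ {v : X | ∃ i, 1 ≤ i ∧ i ≤ N ∧ v = q i} = ⊤)
    (p : ℕ → X)
    (hp : ∀ n, 1 ≤ n → n ≤ N → ∃ dn : Fin n → ℝ,
      (∀ i : Fin n, ∑ j : Fin n,
          (inner ℝ (q ((i : ℕ) + 1)) (𝒜 (q ((j : ℕ) + 1))) : ℝ) * dn j =
        if (i : ℕ) = n - 1 then 1 else 0) ∧
      p n = ∑ j : Fin n, dn j • q ((j : ℕ) + 1)) :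
    ∀ n k, 1 ≤ n → n ≤ N → 1 ≤ k → k ≤ N → n ≠ k →
      (inner ℝ (𝒜 (p n)) (p k) : ℝ) = 0 := by
  intro n k hn1 hnN hk1 hkN hne
  rcases lt_or_gt_of_ne hne with h | h
  · rw [hsym, real_inner_comm]
    exact stmt_14_aux 𝒜 N q p hp k n hk1 hkN hn1 hnN h
  · exact stmt_14_aux 𝒜 N q p hp n k hn1 hnN hk1 hkN h
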